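/- Let A(x) = A_0 + Σ_{l=1}^M x_l A_l, where A_0, A_1, …, A_M are real symmetric N × N matrices, and suppose that A(x) and A(y) commute for all x, y ∈ ℝ^M. Then for every vector a ∈ ℝ^N, the function f : ℝ^M → ℝ defined by f(x) = a^T e^{A(x)} a is convex on ℝ^M. -/

import Mathlib

open Matrix

set_option maxHeartbeats 1000000 in
/-- Key one-dimensional lemma: for commuting symmetric `B C`, the map
`t ↦ aᵀ e^{B + t•C} a` is convex on `ℝ`. -/
lemma key_line_convex {N : ℕ} (B C : Matrix (Fin N) (Fin N) ℝ)
    (hB : B.IsSymm) (hC : C.IsSymm) (h : Commute B C) (a : Fin N → ℝ) :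
    ConvexOn ℝ (Set.univ : Set ℝ)
      (fun t : ℝ => a ⬝ᵥ (NormedSpace.exp (B + t • C)).mulVec a) := by
  classical
  letI : SeminormedRing (Matrix (Fin N) (Fin N) ℝ) := Matrix.linftyOpSemiNormedRing
  letI : NormedRing (Matrix (Fin N) (Fin N) ℝ) := Matrix.linftyOpNormedRing
  letI : NormedAlgebra ℝ (Matrix (Fin N) (Fin N) ℝ) := Matrix.linftyOpNormedAlgebra
  letI : NormedAlgebra ℚ (Matrix (Fin N) (Fin N) ℝ) := Matrix.linftyOpNormedAlgebra
  -- the linear functional M ↦ aᵀ M a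
  let φL : Matrix (Fin N) (Fin N) ℝ →ₗ[ℝ] ℝ :=
    { toFun := fun M => a ⬝ᵥ M.mulVec a
      map_add' := fun M₁ M₂ => by simp [Matrix.add_mulVec]
      map_smul' := fun c M => by simp [Matrix.smul_mulVec, dotProduct_smul] }
  let φ : Matrix (Fin N) (Fin N) ℝ →L[ℝ] ℝ := LinearMap.toContinuousLinearMap φL
  have hφ : ∀ M, φ M = a ⬝ᵥ M.mulVec a := fun M => rfl
  have funeq : ∀ t : ℝ, NormedSpace.exp (B + t • C)
      = NormedSpace.exp B * NormedSpace.exp (t • C) := fun t =>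
    NormedSpace.exp_add_of_commute (h.smul_right t)
  have hgoal : (fun t : ℝ => a ⬝ᵥ (NormedSpace.exp (B + t • C)).mulVec a)
      = fun t : ℝ => φ (NormedSpace.exp B * NormedSpace.exp (t • C)) := by
    funext t; rw [hφ, funeq]
  rw [hgoal]
  have hd1 : ∀ t : ℝ, HasDerivAt
      (fun u : ℝ => φ (NormedSpace.exp B * NormedSpace.exp (u • C)))
      (φ (NormedSpace.exp B * (NormedSpace.exp (t • C) * C))) t := by
    intro t
    exact φ.hasFDerivAt.comp_hasDerivAt t
      ((hasDerivAt_exp_smul_const C t).const_mul (NormedSpace.exp B))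
  have hd2 : ∀ t : ℝ, HasDerivAt
      (fun u : ℝ => φ (NormedSpace.exp B * (NormedSpace.exp (u • C) * C)))
      (φ (NormedSpace.exp B * (NormedSpace.exp (t • C) * C * C))) t := by
    intro t
    exact φ.hasFDerivAt.comp_hasDerivAt t
      (((hasDerivAt_exp_smul_const C t).mul_const C).const_mul (NormedSpace.exp B))
  -- nonnegativity of the second derivative
  have hnonneg : ∀ t : ℝ,
      0 ≤ φ (NormedSpace.exp B * (NormedSpace.exp (t • C) * C * C)) := by
    intro t
    set S := NormedSpace.exp ((2⁻¹ : ℝ) • (B + t • C)) with hSdef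
    have hBtC : (B + t • C).IsSymm := hB.add (hC.smul t)
    have hSsymm : Sᵀ = S := by
      rw [hSdef, ← Matrix.exp_transpose, Matrix.transpose_smul, hBtC]
    have hCS : Commute C S :=
      Commute.exp_right ((h.symm.add_right ((Commute.refl C).smul_right t)).smul_right _)
    have hSS : S * S = NormedSpace.exp B * NormedSpace.exp (t • C) := by
      rw [← funeq, hSdef]; erw [← NormedSpace.exp_add_of_commute (Commute.refl _)]
      congr 1
      rw [← add_smul]
      norm_num
    set D := C * S with hDdef
    have hDT : Dᵀ = S * C := by rw [hDdef, Matrix.transpose_mul, hSsymm, hC]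
    have hfactor : Dᵀ * D = NormedSpace.exp B * (NormedSpace.exp (t • C) * C * C) := by
      calc Dᵀ * D = S * C * (C * S) := by rw [hDT, hDdef]
        _ = S * C * (S * C) := by rw [hCS.eq]
        _ = S * (C * S) * C := by simp only [mul_assoc]
        _ = S * (S * C) * C := by rw [hCS.eq]
        _ = S * S * (C * C) := by simp only [mul_assoc]
        _ = NormedSpace.exp B * NormedSpace.exp (t • C) * (C * C) := by rw [hSS]
        _ = NormedSpace.exp B * (NormedSpace.exp (t • C) * C * C) := by
            simp only [mul_assoc]
    rw [hφ, ← hfactor]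
    have : a ⬝ᵥ (Dᵀ * D).mulVec a = (D.mulVec a) ⬝ᵥ (D.mulVec a) := by
      rw [← Matrix.mulVec_mulVec, Matrix.dotProduct_mulVec, Matrix.vecMul_transpose]
    rw [this]
    exact Finset.sum_nonneg fun i _ => mul_self_nonneg _
  refine convexOn_of_hasDerivWithinAt2_nonneg convex_univ
    (f' := fun t => φ (NormedSpace.exp B * (NormedSpace.exp (t • C) * C)))
    (f'' := fun t => φ (NormedSpace.exp B * (NormedSpace.exp (t • C) * C * C)))
    (fun t _ => (hd1 t).continuousAt.continuousWithinAt)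
    (fun t _ => (hd1 t).hasDerivWithinAt)
    (fun t _ => (hd2 t).hasDerivWithinAt)
    (fun t _ => hnonneg t)

/-- Let `A(x) = A₀ + ∑ l, x l • A l` with all matrices symmetric, and suppose `A(x)` and `A(y)`
commute for all `x, y`. Then for every `a`, the map `x ↦ aᵀ e^{A(x)} a` is convex on `ℝ^M`. -/
theorem convexOn_quadForm_exp_affineMatrix {N M : ℕ}
    (A0 : Matrix (Fin N) (Fin N) ℝ) (Al : Fin M → Matrix (Fin N) (Fin N) ℝ)
    (hA0 : A0.IsSymm) (hAl : ∀ l, (Al l).IsSymm)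
    (hcomm : ∀ x y : Fin M → ℝ,
      Commute (A0 + ∑ l : Fin M, x l • Al l) (A0 + ∑ l : Fin M, y l • Al l))
    (a : Fin N → ℝ) :
    ConvexOn ℝ (Set.univ : Set (Fin M → ℝ))
      (fun x : Fin M → ℝ =>
        a ⬝ᵥ (NormedSpace.exp (A0 + ∑ l : Fin M, x l • Al l)).mulVec a) := by
  classical
  refine ⟨convex_univ, fun x _ y _ p q hp hq hpq => ?_⟩
  set Ax := A0 + ∑ l : Fin M, x l • Al l with hAx
  set Ay := A0 + ∑ l : Fin M, y l • Al l with hAy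
  have hAxsymm : Ax.IsSymm := by
    rw [hAx, Matrix.IsSymm, Matrix.transpose_add, Matrix.transpose_sum, hA0]
    congr 1
    refine Finset.sum_congr rfl fun l _ => ?_
    rw [Matrix.transpose_smul, hAl l]
  have hAysymm : Ay.IsSymm := by
    rw [hAy, Matrix.IsSymm, Matrix.transpose_add, Matrix.transpose_sum, hA0]
    congr 1
    refine Finset.sum_congr rfl fun l _ => ?_
    rw [Matrix.transpose_smul, hAl l]
  have hCsymm : (Ay - Ax).IsSymm := by
    rw [Matrix.IsSymm, Matrix.transpose_sub, hAxsymm, hAysymm]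
  have hcomm' : Commute Ax (Ay - Ax) := (hcomm x y).sub_right (Commute.refl Ax)
  have key := key_line_convex Ax (Ay - Ax) hAxsymm hCsymm hcomm' a
  simp only [smul_eq_mul]
  have hline : A0 + ∑ l : Fin M, (p • x + q • y) l • Al l = Ax + q • (Ay - Ax) := by
    have hsum : ∑ l : Fin M, (p • x + q • y) l • Al l
        = p • ∑ l : Fin M, x l • Al l + q • ∑ l : Fin M, y l • Al l := by
      rw [Finset.smul_sum, Finset.smul_sum, ← Finset.sum_add_distrib]
      refine Finset.sum_congr rfl fun l _ => ?_
      simp [add_smul, smul_smul]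
    rw [hsum, hAx, hAy]
    have hp' : p = 1 - q := by linarith
    rw [hp']
    module
  have h01 := key.2 (Set.mem_univ (0 : ℝ)) (Set.mem_univ (1 : ℝ)) hp hq hpq
  simp only [smul_eq_mul, mul_zero, mul_one, zero_add] at h01
  have e0 : Ax + (0 : ℝ) • (Ay - Ax) = Ax := by rw [zero_smul, add_zero]
  have e1 : Ax + (1 : ℝ) • (Ay - Ax) = Ay := by rw [one_smul]; abel
  rw [e0, e1] at h01
  calc a ⬝ᵥ (NormedSpace.exp (A0 + ∑ l : Fin M, (p • x + q • y) l • Al l)).mulVec a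
      = a ⬝ᵥ (NormedSpace.exp (Ax + q • (Ay - Ax))).mulVec a := by rw [hline]
    _ ≤ p * (a ⬝ᵥ (NormedSpace.exp Ax).mulVec a)
        + q * (a ⬝ᵥ (NormedSpace.exp Ay).mulVec a) := h01
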